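/- arXiv:0805.3449 — 7 statements merged into one kernel-verified Lean document; each statement's English description precedes it below -/
import Mathlib

section
/- Let p > q > 0 be coprime integers with Hirzebruch–Jung expansions p/q = [b_1, …, b_s] and p/(p−q) = [a_1, …, a_r], where all b_i ≥ 2 and all a_i ≥ 2. Then r = 1 + Σ_{i=1}^{s} (b_i − 2) and s = 1 + Σ_{i=1}^{r} (a_i − 2). -/
/-- Auxiliary: continuant computed from the *front* of the list; applied to the
reversed list it gives the continuant of the paper. -/
def Zrev {R : Type*} [CommRing R] : List R → R
  | [] => 1
  | [x] => x
  | x :: y :: l => x * Zrev (y :: l) - Zrev l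

/-- The continuant polynomial `Z_n(x_1,…,x_n)` (with `Z_{-1}=0`, `Z_0=1`) satisfying
`Z_n(x_1,…,x_n) = x_n·Z_{n-1}(x_1,…,x_{n-1}) - Z_{n-2}(x_1,…,x_{n-2})`. -/
def Zc {R : Type*} [CommRing R] (l : List R) : R := Zrev l.reverse

/-- The Hirzebruch–Jung continued fraction `[x_1,…,x_n] = x_1 - 1/[x_2,…,x_n]`. -/
noncomputable def hj {K : Type*} [Field K] : List K → K
  | [] => 0
  | [x] => x
  | x :: y :: l => x - 1 / hj (y :: l)

/-- The `n×n` tridiagonal matrix `M(x_1,…,x_n)` with diagonal entries `x_i`,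
entries `-1` immediately above and below the diagonal, `0` elsewhere. -/
def triMat {n : ℕ} {R : Type*} [CommRing R] (x : Fin n → R) :
    Matrix (Fin n) (Fin n) R :=
  Matrix.of fun i j =>
    if i = j then x i
    else if (i : ℕ) + 1 = (j : ℕ) ∨ (j : ℕ) + 1 = (i : ℕ) then -1 else 0

/-- A tuple `x ∈ ℕ^n` is admissible if `M(x)` is positive semidefinite of rank `≥ n-1`. -/
def Admissible {n : ℕ} (x : Fin n → ℕ) : Prop :=
  (triMat fun i => (x i : ℝ)).PosSemidef ∧ n - 1 ≤ (triMat fun i => (x i : ℝ)).rank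

lemma hj_cons (x : ℚ) (T : List ℚ) (hT : T ≠ []) : hj (x :: T) = x - 1 / hj T := by
  cases T with
  | nil => simp at hT
  | cons y l => rfl

lemma hj_sub_one (x : ℚ) (T : List ℚ) : hj ((x - 1) :: T) = hj (x :: T) - 1 := by
  cases T with
  | nil => simp [hj]
  | cons y l => simp only [hj]; ring

lemma hj_gt_one : ∀ (L : List ℚ), (∀ x ∈ L, (2:ℚ) ≤ x) → L ≠ [] → 1 < hj L := by
  intro L
  induction L with
  | nil => intro _ h; simp at h
  | cons x T ih =>
    intro h _
    have hx : (2:ℚ) ≤ x := h x List.mem_cons_self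
    cases T with
    | nil => simp only [hj]; linarith
    | cons y l =>
      have hT : 1 < hj (y :: l) := ih (fun z hz => h z (List.mem_cons_of_mem _ hz)) (by simp)
      rw [hj_cons x (y::l) (by simp)]
      have h0 : 0 < hj (y::l) := by linarith
      have h1 : 1 / hj (y::l) < 1 := by rw [div_lt_one h0]; linarith
      have h2 : 0 < 1 / hj (y::l) := by positivity
      linarith

lemma hj_le_head (x : ℚ) (T : List ℚ) (hT : ∀ z ∈ T, (2:ℚ) ≤ z) : hj (x :: T) ≤ x := by
  cases T with
  | nil => simp [hj]
  | cons t T0 =>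
    have h1 : 1 < hj (t::T0) := hj_gt_one _ hT (by simp)
    rw [hj_cons x _ (by simp)]
    have : 0 < 1 / hj (t::T0) := by positivity
    linarith

lemma hj_head_lt (x : ℚ) (T : List ℚ) (hT : ∀ z ∈ T, (2:ℚ) ≤ z) (hne : T ≠ []) :
    x - 1 < hj (x :: T) := by
  cases T with
  | nil => simp at hne
  | cons t T0 =>
    have h1 : 1 < hj (t::T0) := hj_gt_one _ hT (by simp)
    rw [hj_cons x _ (by simp)]
    have h0 : 0 < hj (t::T0) := by linarith
    have : 1 / hj (t::T0) < 1 := by rw [div_lt_one h0]; linarith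
    linarith

lemma hj_lt_head (x : ℚ) (T : List ℚ) (hT : ∀ z ∈ T, (2:ℚ) ≤ z) (hne : T ≠ []) :
    hj (x :: T) < x := by
  cases T with
  | nil => simp at hne
  | cons t T0 =>
    have h1 : 1 < hj (t::T0) := hj_gt_one _ hT (by simp)
    rw [hj_cons x _ (by simp)]
    have h0 : 0 < hj (t::T0) := by linarith
    have : 0 < 1 / hj (t::T0) := by positivity
    linarith

lemma map_ge_two {M : List ℤ} (hM : ∀ z ∈ M, (2:ℤ) ≤ z) :
    ∀ w ∈ M.map (fun z : ℤ => (z:ℚ)), (2:ℚ) ≤ w := by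
  intro w hw
  obtain ⟨z, hz, rfl⟩ := List.mem_map.mp hw
  exact_mod_cast hM z hz

lemma dual_len : ∀ (n : ℕ) (L L' : List ℤ), L.length + L'.length ≤ n →
    L ≠ [] → L' ≠ [] →
    (∀ x ∈ L, (2:ℤ) ≤ x) → (∀ x ∈ L', (2:ℤ) ≤ x) →
    1 / hj (L.map (fun z : ℤ => (z:ℚ))) + 1 / hj (L'.map (fun z : ℤ => (z:ℚ))) = 1 →
    (L'.length : ℤ) = 1 + (L.map (fun z => z - 2)).sum := by
  intro n
  induction n with
  | zero =>
    intro L L' hn hL _ _ _ _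
    cases L with
    | nil => exact absurd rfl hL
    | cons a T => simp at hn
  | succ n ih =>
    intro L L' hn hL hL' hbL hbL' hdual
    obtain ⟨x, T, rfl⟩ := List.exists_cons_of_ne_nil hL
    obtain ⟨y, T', rfl⟩ := List.exists_cons_of_ne_nil hL'
    have hx2 : (2:ℤ) ≤ x := hbL x (by simp)
    have hy2 : (2:ℤ) ≤ y := hbL' y (by simp)
    have hbT : ∀ z ∈ T, (2:ℤ) ≤ z := fun z hz => hbL z (by simp [hz])
    have hbT' : ∀ z ∈ T', (2:ℤ) ≤ z := fun z hz => hbL' z (by simp [hz])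
    rw [List.map_cons, List.map_cons] at hdual
    set mT := T.map (fun z : ℤ => (z:ℚ)) with hmT
    set mT' := T'.map (fun z : ℤ => (z:ℚ)) with hmT'
    set u := hj ((x:ℚ) :: mT) with hu_def
    set v := hj ((y:ℚ) :: mT') with hv_def
    have hu : 1 < u := hj_gt_one _ (by
      intro w hw
      rw [List.mem_cons] at hw
      rcases hw with hw | hw
      · rw [hw]; exact_mod_cast hx2
      · exact map_ge_two hbT w hw) (by simp)
    have hv : 1 < v := hj_gt_one _ (by
      intro w hw
      rw [List.mem_cons] at hw
      rcases hw with hw | hw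
      · rw [hw]; exact_mod_cast hy2
      · exact map_ge_two hbT' w hw) (by simp)
    have hu0 : u ≠ 0 := by linarith
    have hv0 : v ≠ 0 := by linarith
    have key : (u - 1) * (v - 1) = 1 := by
      field_simp at hdual
      nlinarith [hdual]
    have hule : u ≤ (x:ℚ) := hj_le_head _ _ (map_ge_two hbT)
    have hvle : v ≤ (y:ℚ) := hj_le_head _ _ (map_ge_two hbT')
    rcases lt_trichotomy u 2 with hcase | hcase | hcase
    · -- u < 2, hence v > 2, x = 2, T ≠ [], reduce to (T, (y-1)::T')
      have hv2 : 2 < v := by nlinarith [key]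
      have hTne : T ≠ [] := by
        intro hTnil
        rw [hTnil] at hmT
        simp [hmT] at hu_def
        rw [show hj [(x:ℚ)] = (x:ℚ) from by simp [hj]] at hu_def
        have : (2:ℚ) ≤ (x:ℚ) := by exact_mod_cast hx2
        rw [hu_def] at hcase; linarith
      have hmTne : mT ≠ [] := by simpa [hmT] using hTne
      have hxlt : (x:ℚ) - 1 < u := hj_head_lt _ _ (map_ge_two hbT) hmTne
      have hx3 : x = 2 := by
        have h1 : (x:ℚ) < 3 := by linarith
        have h2 : (x:ℤ) < 3 := by exact_mod_cast h1
        omega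
      have hw : 1 < hj mT := hj_gt_one _ (map_ge_two hbT) hmTne
      have hw0 : hj mT ≠ 0 := by linarith
      have hufor : u = 2 - 1 / hj mT := by
        rw [hu_def, hj_cons _ _ hmTne, hx3]; norm_num
      -- dual relation for the new pair
      have hy3 : (3:ℤ) ≤ y := by
        have : (2:ℚ) < (y:ℚ) := lt_of_lt_of_le hv2 hvle
        have : (2:ℤ) < y := by exact_mod_cast this
        omega
      have hvm1 : hj (((y:ℚ) - 1) :: mT') = v - 1 := by
        rw [hj_sub_one, hv_def]
      have hnewdual : 1 / hj mT + 1 / hj (((y:ℚ) - 1) :: mT') = 1 := by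
        rw [hvm1]
        have hv1 : v - 1 ≠ 0 := by linarith
        have key2 : (hj mT - 1) * (v - 1) = hj mT := by
          have : ((2 - 1 / hj mT) - 1) * (v - 1) = 1 := by rw [← hufor]; exact key
          field_simp at this
          linarith
        field_simp
        linarith [key2]
      have ihres := ih T ((y-1)::T') (by simp at hn ⊢; omega) hTne (by simp)
        hbT (by
          intro z hz
          rw [List.mem_cons] at hz
          rcases hz with hz | hz
          · omega
          · exact hbT' z hz)
        (by
          rw [List.map_cons]
          have : ((y - 1 : ℤ) : ℚ) = (y:ℚ) - 1 := by push_cast; ring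
          rw [this]
          exact hnewdual)
      simp only [List.length_cons, List.map_cons, List.sum_cons] at ihres ⊢
      push_cast at ihres ⊢
      rw [hx3] at *
      push_cast
      linarith [ihres]
    · -- u = 2 : v = 2, T = [], T' = [], x = 2
      have hvv : v = 2 := by nlinarith [key]
      have hTnil : T = [] := by
        by_contra hTne
        have hmTne : mT ≠ [] := by simpa [hmT] using hTne
        have hxlt : (x:ℚ) - 1 < u := hj_head_lt _ _ (map_ge_two hbT) hmTne
        have hxgt : u < (x:ℚ) := hj_lt_head _ _ (map_ge_two hbT) hmTne
        have h1 : (x:ℚ) < 3 := by linarith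
        have h2 : 2 < (x:ℚ) := by linarith
        have : (2:ℤ) < x := by exact_mod_cast h2
        have : (x:ℤ) < 3 := by exact_mod_cast h1
        omega
      have hT'nil : T' = [] := by
        by_contra hTne
        have hmTne : mT' ≠ [] := by simpa [hmT'] using hTne
        have hxlt : (y:ℚ) - 1 < v := hj_head_lt _ _ (map_ge_two hbT') hmTne
        have hygt : v < (y:ℚ) := hj_lt_head _ _ (map_ge_two hbT') hmTne
        have h1 : (y:ℚ) < 3 := by linarith
        have h2 : 2 < (y:ℚ) := by linarith
        have : (2:ℤ) < y := by exact_mod_cast h2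
        have : (y:ℤ) < 3 := by exact_mod_cast h1
        omega
      have hxval : (x:ℚ) = 2 := by
        rw [hTnil] at hmT
        simp [hmT] at hu_def
        rw [show hj [(x:ℚ)] = (x:ℚ) from by simp [hj]] at hu_def
        rw [← hu_def]; exact hcase
      have hx2' : x = 2 := by exact_mod_cast hxval
      subst hTnil; subst hT'nil
      simp [hx2']
    · -- 2 < u : v < 2, y = 2, T' ≠ [], reduce to ((x-1)::T, T')
      have hv2 : v < 2 := by nlinarith [key]
      have hT'ne : T' ≠ [] := by
        intro hTnil
        rw [hTnil] at hmT'
        simp [hmT'] at hv_def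
        rw [show hj [(y:ℚ)] = (y:ℚ) from by simp [hj]] at hv_def
        have : (2:ℚ) ≤ (y:ℚ) := by exact_mod_cast hy2
        rw [hv_def] at hv2; linarith
      have hmT'ne : mT' ≠ [] := by simpa [hmT'] using hT'ne
      have hylt : (y:ℚ) - 1 < v := hj_head_lt _ _ (map_ge_two hbT') hmT'ne
      have hy3 : y = 2 := by
        have h1 : (y:ℚ) < 3 := by linarith
        have h2 : (y:ℤ) < 3 := by exact_mod_cast h1
        omega
      have hw : 1 < hj mT' := hj_gt_one _ (map_ge_two hbT') hmT'ne
      have hw0 : hj mT' ≠ 0 := by linarith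
      have hvfor : v = 2 - 1 / hj mT' := by
        rw [hv_def, hj_cons _ _ hmT'ne, hy3]; norm_num
      have hx3 : (3:ℤ) ≤ x := by
        have : (2:ℚ) < (x:ℚ) := lt_of_lt_of_le hcase hule
        have : (2:ℤ) < x := by exact_mod_cast this
        omega
      have hum1 : hj (((x:ℚ) - 1) :: mT) = u - 1 := by
        rw [hj_sub_one, hu_def]
      have hnewdual : 1 / hj (((x:ℚ) - 1) :: mT) + 1 / hj mT' = 1 := by
        rw [hum1]
        have hu1 : u - 1 ≠ 0 := by linarith
        have key2 : (u - 1) * (hj mT' - 1) = hj mT' := by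
          have : (u - 1) * ((2 - 1 / hj mT') - 1) = 1 := by rw [← hvfor]; exact key
          field_simp at this
          linarith
        field_simp
        linarith [key2]
      have ihres := ih ((x-1)::T) T' (by simp at hn ⊢; omega) (by simp) hT'ne
        (by
          intro z hz
          rw [List.mem_cons] at hz
          rcases hz with hz | hz
          · omega
          · exact hbT z hz)
        hbT'
        (by
          rw [List.map_cons]
          have : ((x - 1 : ℤ) : ℚ) = (x:ℚ) - 1 := by push_cast; ring
          rw [this]
          exact hnewdual)
      simp only [List.length_cons, List.map_cons, List.sum_cons] at ihres ⊢
      push_cast at ihres ⊢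
      linarith [ihres]

lemma sum_range'_eq_Icc (f : ℕ → ℤ) (s : ℕ) :
    ((List.range' 1 s).map f).sum = ∑ i ∈ Finset.Icc 1 s, f i := by
  induction s with
  | zero => simp
  | succ s ih =>
    rw [List.range'_concat]
    rw [Finset.sum_Icc_succ_top (by omega : 1 ≤ s + 1)]
    simp [ih, Nat.add_comm 1 s]

/-- if `p/q = [b_1,…,b_s]` and `p/(p-q) = [a_1,…,a_r]` with all entries `≥ 2`,
then `r = 1 + Σ (b_i - 2)` and `s = 1 + Σ (a_i - 2)`. -/
theorem length_duality (p q : ℤ) (hq : 0 < q) (hpq : q < p) (hcop : IsCoprime p q)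
    (s r : ℕ) (b a : ℕ → ℤ)
    (hb : ∀ i, 1 ≤ i → i ≤ s → 2 ≤ b i)
    (ha : ∀ i, 1 ≤ i → i ≤ r → 2 ≤ a i)
    (hexpb : (p : ℚ) / (q : ℚ) = hj ((List.range' 1 s).map fun i => (b i : ℚ)))
    (hexpa : (p : ℚ) / ((p : ℚ) - (q : ℚ)) =
      hj ((List.range' 1 r).map fun i => (a i : ℚ))) :
    (r : ℤ) = 1 + ∑ i ∈ Finset.Icc 1 s, (b i - 2) ∧
    (s : ℤ) = 1 + ∑ i ∈ Finset.Icc 1 r, (a i - 2) := by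
  have hp0 : (0:ℚ) < (p:ℚ) := by exact_mod_cast (by omega : (0:ℤ) < p)
  have hq0 : (0:ℚ) < (q:ℚ) := by exact_mod_cast hq
  have hpq0 : (0:ℚ) < (p:ℚ) - (q:ℚ) := by
    have : (q:ℚ) < (p:ℚ) := by exact_mod_cast hpq
    linarith
  set L : List ℤ := (List.range' 1 s).map b with hL_def
  set L' : List ℤ := (List.range' 1 r).map a with hL'_def
  have hmapb : L.map (fun z : ℤ => (z:ℚ)) = (List.range' 1 s).map fun i => (b i : ℚ) := by
    rw [hL_def, List.map_map]; rfl
  have hmapa : L'.map (fun z : ℤ => (z:ℚ)) = (List.range' 1 r).map fun i => (a i : ℚ) := by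
    rw [hL'_def, List.map_map]; rfl
  have hbL : ∀ x ∈ L, (2:ℤ) ≤ x := by
    intro x hx
    obtain ⟨i, hi, rfl⟩ := List.mem_map.mp hx
    rw [List.mem_range'_1] at hi
    exact hb i hi.1 (by omega)
  have hbL' : ∀ x ∈ L', (2:ℤ) ≤ x := by
    intro x hx
    obtain ⟨i, hi, rfl⟩ := List.mem_map.mp hx
    rw [List.mem_range'_1] at hi
    exact ha i hi.1 (by omega)
  have hLne : L ≠ [] := by
    intro h
    have hs : s = 0 := by
      have := congrArg List.length h
      simpa [hL_def] using this
    rw [hs] at hexpb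
    have he : (List.range' 1 0).map (fun i => (b i:ℚ)) = [] := by simp
    rw [he, show hj ([]:List ℚ) = 0 from by simp [hj]] at hexpb
    have hpos : (0:ℚ) < (p:ℚ)/(q:ℚ) := by positivity
    rw [hexpb] at hpos
    exact lt_irrefl _ hpos
  have hL'ne : L' ≠ [] := by
    intro h
    have hs : r = 0 := by
      have := congrArg List.length h
      simpa [hL'_def] using this
    rw [hs] at hexpa
    have he : (List.range' 1 0).map (fun i => (a i:ℚ)) = [] := by simp
    rw [he, show hj ([]:List ℚ) = 0 from by simp [hj]] at hexpa
    have hpos : (0:ℚ) < (p:ℚ)/((p:ℚ)-(q:ℚ)) := by positivity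
    rw [hexpa] at hpos
    exact lt_irrefl _ hpos
  have hdual : 1 / hj (L.map (fun z : ℤ => (z:ℚ))) + 1 / hj (L'.map (fun z : ℤ => (z:ℚ))) = 1 := by
    rw [hmapb, hmapa, ← hexpb, ← hexpa]
    rw [one_div_div, one_div_div]
    field_simp
    ring
  have hdual' : 1 / hj (L'.map (fun z : ℤ => (z:ℚ))) + 1 / hj (L.map (fun z : ℤ => (z:ℚ))) = 1 := by
    linarith [hdual]
  have h1 := dual_len (L.length + L'.length) L L' le_rfl hLne hL'ne hbL hbL' hdual
  have h2 := dual_len (L'.length + L.length) L' L le_rfl hL'ne hLne hbL' hbL hdual'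
  have hlenL : L.length = s := by rw [hL_def]; simp
  have hlenL' : L'.length = r := by rw [hL'_def]; simp
  have hsumb : (L.map (fun z => z - 2)).sum = ∑ i ∈ Finset.Icc 1 s, (b i - 2) := by
    rw [hL_def, List.map_map]
    exact sum_range'_eq_Icc (fun i => b i - 2) s
  have hsuma : (L'.map (fun z => z - 2)).sum = ∑ i ∈ Finset.Icc 1 r, (a i - 2) := by
    rw [hL'_def, List.map_map]
    exact sum_range'_eq_Icc (fun i => a i - 2) r
  constructor
  · rw [← hsumb, ← h1, hlenL']
  · rw [← hsuma, ← h2, hlenL]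
end

section
/- If x = (x_1, …, x_n) ∈ ℕ^n is admissible and x' = (x'_1, …, x'_n) ∈ ℕ^n satisfies x'_i ≥ x_i for all i, then x' is admissible. -/
open Matrix in
lemma rank_le_rank_add_of_psd {n : ℕ} {A B : Matrix (Fin n) (Fin n) ℝ}
    (hA : A.PosSemidef) (hB : B.PosSemidef) : A.rank ≤ (A + B).rank := by
  have hker : LinearMap.ker (A + B).mulVecLin ≤ LinearMap.ker A.mulVecLin := by
    intro v hv
    simp only [LinearMap.mem_ker, mulVecLin_apply] at hv ⊢
    have h0 : star v ⬝ᵥ (A + B) *ᵥ v = 0 := by rw [hv, dotProduct_zero]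
    rw [add_mulVec, dotProduct_add] at h0
    have hA0 : star v ⬝ᵥ A *ᵥ v = 0 :=
      le_antisymm (by linarith [hA.dotProduct_mulVec_nonneg v, hB.dotProduct_mulVec_nonneg v]) (hA.dotProduct_mulVec_nonneg v)
    exact (hA.dotProduct_mulVec_zero_iff v).mp hA0
  have h1 := LinearMap.finrank_range_add_finrank_ker A.mulVecLin
  have h2 := LinearMap.finrank_range_add_finrank_ker (A + B).mulVecLin
  have h3 : Module.finrank ℝ (LinearMap.ker (A + B).mulVecLin) ≤
      Module.finrank ℝ (LinearMap.ker A.mulVecLin) :=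
    Submodule.finrank_mono hker
  simp only [Matrix.rank]
  omega

lemma triMat_add_diag {n : ℕ} (x x' : Fin n → ℕ) (h : ∀ i, x i ≤ x' i) :
    (triMat fun i => (x' i : ℝ)) =
      (triMat fun i => (x i : ℝ)) +
        Matrix.diagonal (fun i => (x' i : ℝ) - (x i : ℝ)) := by
  ext i j
  by_cases hij : i = j <;>
    simp [triMat, Matrix.diagonal_apply, hij] <;> ring

/-- if `x ∈ ℕ^n` is admissible and `x'_i ≥ x_i` for all `i`,
then `x'` is admissible. -/
theorem admissible_mono (n : ℕ) (x x' : Fin n → ℕ)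
    (hx : Admissible x) (h : ∀ i, x i ≤ x' i) :
    Admissible x' := by
  obtain ⟨hpsd, hrank⟩ := hx
  have hd : (Matrix.diagonal fun i => (x' i : ℝ) - (x i : ℝ)).PosSemidef :=
    Matrix.PosSemidef.diagonal fun i =>
      show (0 : ℝ) ≤ _ from sub_nonneg.mpr (Nat.cast_le.mpr (h i))
  unfold Admissible
  rw [triMat_add_diag x x' h]
  refine ⟨?_, ?_⟩
  · exact Matrix.PosSemidef.of_dotProduct_mulVec_nonneg (hpsd.1.add hd.1) fun v => by
      rw [Matrix.add_mulVec, dotProduct_add]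
      exact add_nonneg (hpsd.dotProduct_mulVec_nonneg v) (hd.dotProduct_mulVec_nonneg v)
  · exact le_trans hrank (rank_le_rank_add_of_psd hpsd hd)
end

section
/- Let x = (x_1, …, x_n) ∈ ℕ^n be admissible, and let ν_0, ν_1, …, ν_{n+1} be integers satisfying ν_{i+1} ≥ x_i·ν_i − ν_{i-1} for all 1 ≤ i ≤ n. Then for every 1 ≤ i ≤ n one has ν_{i+1} ≥ Z_i(x_i, x_{i-1}, …, x_1)·ν_1 − Z_{i-1}(x_i, x_{i-1}, …, x_2)·ν_0. -/
/-! ### Auxiliary lemmas -/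

lemma psd_det_nonneg {m : ℕ} {M : Matrix (Fin m) (Fin m) ℝ} (hM : M.PosSemidef) :
    0 ≤ M.det := by
  rw [hM.isHermitian.det_eq_prod_eigenvalues]
  exact Finset.prod_nonneg fun i _ => by exact_mod_cast hM.eigenvalues_nonneg i

lemma triMat_submatrix_succ {m : ℕ} {R : Type*} [CommRing R] (y : Fin (m+1) → R) :
    (triMat y).submatrix Fin.succ Fin.succ = triMat (y ∘ Fin.succ) := by
  ext i j
  simp only [Matrix.submatrix_apply, triMat, Matrix.of_apply, Function.comp]
  congr 1
  · simp [Fin.succ_inj]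
  · congr 1
    simp [Fin.val_succ]

lemma Zrev_ofFn_succ {R : Type*} [CommRing R] {m : ℕ} (y : Fin (m+2) → R) :
    Zrev (List.ofFn y) = y 0 * Zrev (List.ofFn (y ∘ Fin.succ))
      - Zrev (List.ofFn (y ∘ Fin.succ ∘ Fin.succ)) := by
  simp only [List.ofFn_succ, Function.comp_apply]
  rfl

lemma det_triMat {R : Type*} [CommRing R] : ∀ (m : ℕ) (y : Fin m → R),
    (triMat y).det = Zrev (List.ofFn y)
  | 0, y => by simp [triMat, Zrev]
  | 1, y => by simp [Matrix.det_fin_one, triMat, Zrev]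
  | (m+2), y => by
    have hsub : (triMat y).submatrix (Fin.succ ∘ Fin.succ) (Fin.succAbove 1 ∘ Fin.succ)
        = triMat (y ∘ Fin.succ ∘ Fin.succ) := by
      ext i j
      simp only [Matrix.submatrix_apply, triMat, Matrix.of_apply, Function.comp,
        Fin.succAbove, Fin.lt_def, Fin.ext_iff]
      split_ifs <;> simp_all [Fin.ext_iff, Fin.val_succ]
    have h0 : (triMat y).submatrix Fin.succ (Fin.succAbove 1) 0 0 = -1 := by
      simp [triMat, Fin.succAbove, Fin.lt_def, Fin.ext_iff]
    have hz : ∀ i : Fin m,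
        (triMat y).submatrix Fin.succ (Fin.succAbove 1) i.succ 0 = 0 := by
      intro i
      simp [triMat, Fin.succAbove, Fin.lt_def, Fin.ext_iff]
    have key : ((triMat y).submatrix Fin.succ (Fin.succAbove (1 : Fin (m+2)))).det
        = - (triMat (y ∘ Fin.succ ∘ Fin.succ)).det := by
      rw [Matrix.det_succ_column_zero, Fin.sum_univ_succ]
      simp only [hz, h0, Matrix.submatrix_submatrix, Fin.succAbove_zero, mul_zero, zero_mul,
        mul_zero, Finset.sum_const_zero, add_zero, Fin.val_zero, pow_zero, one_mul]
      rw [hsub]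
      ring
    have hz2 : ∀ i : Fin m, triMat y 0 i.succ.succ = 0 := by
      intro i; simp [triMat, Fin.ext_iff]
    have h02 : triMat y 0 0 = y 0 := by simp [triMat]
    have h12 : triMat y 0 (Fin.succ 0) = -1 := by simp [triMat, Fin.ext_iff]
    have h12' : triMat y 0 1 = -1 := by simp [triMat, Fin.ext_iff]
    rw [Matrix.det_succ_row_zero, Fin.sum_univ_succ, Fin.sum_univ_succ]
    simp only [hz2, mul_zero, zero_mul, Finset.sum_const_zero, add_zero, h02, h12, h12',
      Fin.succAbove_zero, Fin.succ_zero_eq_one, Fin.val_zero, Fin.val_one, pow_zero, pow_one,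
      one_mul, triMat_submatrix_succ, key, det_triMat (m+1) (y ∘ Fin.succ),
      det_triMat m (y ∘ Fin.succ ∘ Fin.succ), Zrev_ofFn_succ y]
    ring

lemma Zrev_intCast : ∀ l : List ℤ, ((Zrev l : ℤ) : ℝ) = Zrev (l.map fun z : ℤ => (z : ℝ))
  | [] => by simp [Zrev]
  | [x] => by simp [Zrev]
  | x :: y :: l => by
    have h1 := Zrev_intCast (y :: l)
    have h2 := Zrev_intCast l
    show ((x * Zrev (y :: l) - Zrev l : ℤ) : ℝ)
      = (x : ℝ) * Zrev ((y :: l).map fun z : ℤ => (z : ℝ)) - Zrev (l.map fun z : ℤ => (z : ℝ))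
    rw [Int.cast_sub, Int.cast_mul, h1, h2]

lemma range'_map_eq_ofFn (g : ℕ → ℝ) : ∀ (m s : ℕ),
    (List.range' s m).map g = List.ofFn (fun k : Fin m => g (s + k))
  | 0, s => by simp
  | (m+1), s => by
    rw [List.range'_succ, List.map_cons, range'_map_eq_ofFn g m (s+1), List.ofFn_succ]
    have h : (fun k : Fin m => g (s + 1 + ↑k)) = fun i : Fin m => g (s + (↑i + 1)) := by
      funext k; congr 1; omega
    simp only [h]
    congr 1

lemma block_nonneg_real {n : ℕ} (x : ℕ → ℕ)
    (h : (triMat fun i : Fin n => (x (i.1 + 1) : ℝ)).PosSemidef)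
    (s m : ℕ) (hs : 1 ≤ s) (hm : s + m ≤ n + 1) :
    0 ≤ Zrev ((List.range' s m).map fun j => (x j : ℝ)) := by
  set e : Fin m → Fin n := fun k => ⟨s - 1 + k.1, by omega⟩ with he
  have heq : ((triMat fun i : Fin n => (x (i.1 + 1) : ℝ)).submatrix e e)
      = triMat (fun k : Fin m => (x (s + k.1) : ℝ)) := by
    ext i j
    have harg : s - 1 + (i : ℕ) + 1 = s + i := by omega
    simp only [Matrix.submatrix_apply, triMat, Matrix.of_apply, he, Fin.ext_iff]
    split_ifs <;> first
      | rfl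
      | omega
      | rw [harg]
  have hpsd : (triMat fun k : Fin m => (x (s + k.1) : ℝ)).PosSemidef :=
    heq ▸ h.submatrix e
  have hd : (0:ℝ) ≤ (triMat fun k : Fin m => (x (s + k.1) : ℝ)).det := psd_det_nonneg hpsd
  rw [det_triMat m] at hd
  rw [range'_map_eq_ofFn (fun j => (x j : ℝ)) m s]
  exact hd

lemma block_nonneg_int {n : ℕ} (x : ℕ → ℕ)
    (h : (triMat fun i : Fin n => (x (i.1 + 1) : ℝ)).PosSemidef)
    (s m : ℕ) (hs : 1 ≤ s) (hm : s + m ≤ n + 1) :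
    0 ≤ Zrev ((List.range' s m).map fun j => (x j : ℤ)) := by
  have hr := block_nonneg_real x h s m hs hm
  have hc : ((Zrev ((List.range' s m).map fun j => (x j : ℤ)) : ℤ) : ℝ)
      = Zrev ((List.range' s m).map fun j => (x j : ℝ)) := by
    rw [Zrev_intCast, List.map_map]
    congr 1
  rw [← hc] at hr
  exact_mod_cast hr

/-- for an admissible `x` and integers `ν_i` with
`ν_{i+1} ≥ x_i·ν_i - ν_{i-1}` for `1 ≤ i ≤ n`, one has
`ν_{i+1} ≥ Z_i(x_i,…,x_1)·ν_1 - Z_{i-1}(x_i,…,x_2)·ν_0`. -/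
theorem nu_ge_of_admissible (n : ℕ) (x : ℕ → ℕ)
    (hadm : Admissible fun i : Fin n => x (i.1 + 1))
    (ν : ℕ → ℤ)
    (hrec : ∀ i, 1 ≤ i → i ≤ n → (x i : ℤ) * ν i - ν (i - 1) ≤ ν (i + 1)) :
    ∀ i, 1 ≤ i → i ≤ n →
      Zc (((List.range' 1 i).map fun j => (x j : ℤ)).reverse) * ν 1 -
        Zc (((List.range' 2 (i - 1)).map fun j => (x j : ℤ)).reverse) * ν 0 ≤ ν (i + 1) := by
  intro i hi1 hin
  have aux : ∀ d j, 1 ≤ j → j + d = i →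
      Zrev ((List.range' j (d+1)).map fun t => (x t : ℤ)) * ν j -
        Zrev ((List.range' (j+1) d).map fun t => (x t : ℤ)) * ν (j-1) ≤ ν (i+1) := by
    intro d
    induction d with
    | zero =>
      intro j hj hji
      have hji' : j = i := by omega
      subst hji'
      have := hrec j hj (by omega)
      simpa [Zrev] using this
    | succ d ih =>
      intro j hj hji
      have hih := ih (j+1) (by omega) (by omega)
      set A := Zrev ((List.range' (j+1) (d+1)).map fun t => (x t : ℤ)) with hA
      set B := Zrev ((List.range' (j+2) d).map fun t => (x t : ℤ)) with hB
      have hA0 : 0 ≤ A := block_nonneg_int x hadm.1 (j+1) (d+1) (by omega) (by omega)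
      have hr := hrec j hj (by omega)
      have h1 : A * ((x j : ℤ) * ν j - ν (j-1)) ≤ A * ν (j+1) :=
        mul_le_mul_of_nonneg_left hr hA0
      have hgoal : Zrev ((List.range' j (d+1+1)).map fun t => (x t : ℤ))
          = (x j : ℤ) * A - B := by
        rw [List.range'_succ, List.map_cons]
        rw [show List.range' (j+1) (d+1) = (j+1) :: List.range' (j+2) d from List.range'_succ .. ]
        rw [List.map_cons, Zrev, hA, hB]
        rw [show List.range' (j+1) (d+1) = (j+1) :: List.range' (j+2) d from List.range'_succ .. ]
        rw [List.map_cons]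
      rw [hgoal]
      have hsub : (j + 1) - 1 = j := by omega
      rw [hsub] at hih
      nlinarith [h1, hih]
  have h1 := aux (i-1) 1 le_rfl (by omega)
  simp only [Zc, List.reverse_reverse]
  have e1 : i - 1 + 1 = i := by omega
  rw [e1] at h1
  simpa using h1
end

section
/- If x = (x_1, …, x_n) ∈ ℕ^n is admissible, then every continuant of a consecutive subsequence is nonnegative: Z_m(x_i, x_{i+1}, …, x_{i+m-1}) ≥ 0 for all 1 ≤ i and m ≥ 0 with i + m − 1 ≤ n. -/
lemma Zrev_map {R S : Type*} [CommRing R] [CommRing S] (f : R →+* S) :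
    ∀ l : List R, Zrev (l.map f) = f (Zrev l)
  | [] => by simp [Zrev]
  | [x] => by simp [Zrev]
  | x :: y :: l => by
    simp only [List.map_cons, Zrev, map_sub, map_mul]
    rw [← List.map_cons, Zrev_map f (y :: l), Zrev_map f l]

lemma Zc_map {R S : Type*} [CommRing R] [CommRing S] (f : R →+* S) (l : List R) :
    Zc (l.map f) = f (Zc l) := by
  rw [Zc, ← List.map_reverse, Zrev_map, Zc]

lemma detTri {R : Type*} [CommRing R] :
    ∀ (m : ℕ) (x : Fin m → R), (triMat x).det = Zrev (List.ofFn x)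
  | 0, x => by simp [Zrev, Matrix.det_fin_zero]
  | 1, x => by simp [Matrix.det_fin_one, triMat, Zrev]
  | (m + 2), x => by
    have hsa0 : (1 : Fin (m + 2)).succAbove 0 = 0 := by
      rw [Fin.succAbove_of_castSucc_lt]
      · rfl
      · rw [Fin.lt_def]; simp
    have hsa : ∀ j : Fin m, (1 : Fin (m + 2)).succAbove j.succ = j.succ.succ := by
      intro j
      rw [Fin.succAbove_of_le_castSucc]
      rw [Fin.le_def]; simp
    have h1 : (triMat x).submatrix Fin.succ Fin.succ = triMat (x ∘ Fin.succ) := by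
      ext i j
      simp only [Matrix.submatrix_apply, triMat, Matrix.of_apply, Function.comp_apply,
        Fin.val_succ, Fin.ext_iff, Fin.val_zero, or_false, false_or]
      split_ifs <;> first | rfl | omega | simp_all | (exfalso; omega)
    have h2 : ((triMat x).submatrix Fin.succ ((1 : Fin (m+2)).succAbove)).submatrix
        Fin.succ Fin.succ = triMat (x ∘ Fin.succ ∘ Fin.succ) := by
      ext i j
      simp only [Matrix.submatrix_apply, hsa, triMat, Matrix.of_apply, Function.comp_apply,
        Fin.val_succ, Fin.ext_iff, Fin.val_zero, or_false, false_or]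
      split_ifs <;> first | rfl | omega | simp_all | (exfalso; omega)
    have hB : ((triMat x).submatrix Fin.succ ((1 : Fin (m+2)).succAbove)).det
        = - Zrev (List.ofFn (x ∘ Fin.succ ∘ Fin.succ)) := by
      rw [Matrix.det_succ_column_zero, Fin.sum_univ_succ]
      have hz : ∀ i : Fin m,
          (triMat x).submatrix Fin.succ ((1 : Fin (m+2)).succAbove) i.succ 0 = 0 := by
        intro i
        simp only [Matrix.submatrix_apply, hsa0, triMat, Matrix.of_apply, Fin.ext_iff,
          Fin.val_succ, Fin.val_zero, or_false, false_or]
        split_ifs <;> first | rfl | omega | simp_all | (exfalso; omega)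
      have hb00 : (triMat x).submatrix Fin.succ ((1 : Fin (m+2)).succAbove) 0 0 = -1 := by
        simp only [Matrix.submatrix_apply, hsa0, triMat, Matrix.of_apply]
        norm_num [Fin.ext_iff]
      rw [Finset.sum_eq_zero (fun i _ => by rw [hz i]; ring)]
      simp only [Fin.succAbove_zero, hb00, h2, detTri (m) (x ∘ Fin.succ ∘ Fin.succ),
        Fin.val_zero, pow_zero]
      ring
    rw [Matrix.det_succ_row_zero, Fin.sum_univ_succ, Fin.sum_univ_succ]
    have hz : ∀ j : Fin m, triMat x 0 j.succ.succ = 0 := by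
      intro j
      simp only [triMat, Matrix.of_apply, Fin.ext_iff, Fin.val_succ, Fin.val_zero,
        or_false, false_or]
      split_ifs <;> first | rfl | omega | simp_all | (exfalso; omega)
    rw [Finset.sum_eq_zero (fun j _ => by rw [hz j]; ring)]
    have h00 : triMat x 0 0 = x 0 := by simp [triMat]
    have h01 : triMat x 0 (Fin.succ 0) = -1 := by
      simp only [triMat, Matrix.of_apply]
      norm_num [Fin.ext_iff]
    rw [h00, h01, Fin.succAbove_zero, h1, detTri (m+1) (x ∘ Fin.succ)]
    have hss : (Fin.succ (0 : Fin (m+1))) = (1 : Fin (m+2)) := rfl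
    rw [hss, hB]
    have hofn : List.ofFn x = x 0 :: x 1 :: List.ofFn (x ∘ Fin.succ ∘ Fin.succ) := by
      rw [List.ofFn_succ, List.ofFn_succ]; rfl
    have hofn2 : List.ofFn (x ∘ Fin.succ) = x 1 :: List.ofFn (x ∘ Fin.succ ∘ Fin.succ) := by
      rw [List.ofFn_succ]; rfl
    rw [hofn, hofn2, Zrev]
    simp only [Fin.val_zero, Fin.val_one, pow_zero, pow_one]
    ring

lemma triMat_rev {R : Type*} [CommRing R] (m : ℕ) (x : Fin m → R) :
    triMat (x ∘ Fin.rev) = (triMat x).submatrix Fin.rev Fin.rev := by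
  ext i j
  have hi := i.isLt
  have hj := j.isLt
  simp only [Matrix.submatrix_apply, triMat, Matrix.of_apply, Function.comp_apply,
    Fin.ext_iff, Fin.val_rev]
  split_ifs <;> first | rfl | omega | simp_all | (exfalso; omega)

lemma ofFn_rev' {α : Type*} (m : ℕ) (x : Fin m → α) :
    List.ofFn (x ∘ Fin.rev) = (List.ofFn x).reverse := by
  apply List.ext_getElem
  · simp
  · intro k h1 h2
    simp only [List.getElem_ofFn, List.getElem_reverse, Function.comp_apply,
      List.length_ofFn]
    congr 1
    apply Fin.ext
    simp only [Fin.val_rev]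
    simp at h1
    omega

lemma detTri' {R : Type*} [CommRing R] (m : ℕ) (x : Fin m → R) :
    (triMat x).det = Zc (List.ofFn x) := by
  have h := detTri m (x ∘ Fin.rev)
  have hco : ((Fin.rev : Fin m → Fin m)) = ⇑(Fin.revPerm (n := m)) := rfl
  rw [ofFn_rev', triMat_rev, hco, Matrix.det_submatrix_equiv_self Fin.revPerm] at h
  exact h

lemma psd_det_nonneg_s12 {m : ℕ} {A : Matrix (Fin m) (Fin m) ℝ} (h : A.PosSemidef) :
    0 ≤ A.det := by
  rw [h.isHermitian.det_eq_prod_eigenvalues]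
  exact Finset.prod_nonneg fun i _ => by exact_mod_cast h.eigenvalues_nonneg i

/-- if `x ∈ ℕ^n` is admissible, then the continuant of every consecutive
subsequence is nonnegative: `Z_m(x_i,…,x_{i+m-1}) ≥ 0` whenever `1 ≤ i` and `i+m-1 ≤ n`. -/
theorem Zc_nonneg_of_admissible (n : ℕ) (x : ℕ → ℕ)
    (hadm : Admissible fun i : Fin n => x (i.1 + 1)) :
    ∀ i m, 1 ≤ i → i + m ≤ n + 1 →
      0 ≤ Zc ((List.range' i m).map fun j => (x j : ℤ)) := by
  intro i m hi him
  set f : Fin m → ℝ := fun k => (x (i + k) : ℝ) with hf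
  have hemb : ∀ k : Fin m, i - 1 + (k : ℕ) < n := fun k => by
    have := k.isLt; omega
  set e : Fin m → Fin n := fun k => ⟨i - 1 + k, hemb k⟩ with he
  have hsub : triMat f = (triMat fun i : Fin n => (x (i.1 + 1) : ℝ)).submatrix e e := by
    ext k l
    have hk := k.isLt
    have hl := l.isLt
    simp only [Matrix.submatrix_apply, triMat, Matrix.of_apply, he, Fin.ext_iff]
    have harg : i - 1 + (k : ℕ) + 1 = i + (k : ℕ) := by omega
    split_ifs <;> first | rfl | (exact congrArg (fun t => ((x t : ℕ) : ℝ)) harg.symm) | (exfalso; omega)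
  have hdet : 0 ≤ (triMat f).det := by
    rw [hsub]
    exact psd_det_nonneg_s12 (hadm.1.submatrix e)
  rw [detTri' m f] at hdet
  have hlist : List.ofFn f
      = ((List.range' i m).map fun j => (x j : ℤ)).map fun t : ℤ => (t : ℝ) := by
    apply List.ext_getElem
    · simp
    · intro k h1 h2
      simp [hf, List.getElem_range']
  rw [hlist] at hdet
  have : ((fun t : ℤ => (t : ℝ)) : ℤ → ℝ) = (Int.castRingHom ℝ : ℤ → ℝ) := rfl
  rw [this, Zc_map] at hdet
  simp only [Int.coe_castRingHom] at hdet
  exact_mod_cast hdet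
end

section
/- Let p > q > 0 be coprime integers with p/(p−q) = [a_1, …, a_r], all a_i ≥ 2. Define weights w_0 := 1 and w_i := Z_{i-1}(a_1, …, a_{i-1}) − Z_{i-2}(a_2, …, a_{i-1}) for 1 ≤ i ≤ r+1. Then 1 = w_0 = w_1 ≤ w_2 ≤ … ≤ w_{r+1} and w_{r+1} = q. -/
lemma Zrev_cons_cons {R : Type*} [CommRing R] (x y : R) (l : List R) :
    Zrev (x :: y :: l) = x * Zrev (y :: l) - Zrev l := rfl

lemma range'_map_reverse (a : ℕ → ℤ) (s n : ℕ) :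
    ((List.range' s (n+1)).map a).reverse = a (s+n) :: ((List.range' s n).map a).reverse := by
  rw [List.range'_concat]; simp

lemma Zc_rec (a : ℕ → ℤ) (s n : ℕ) :
    Zc ((List.range' s (n+2)).map a)
      = a (s+n+1) * Zc ((List.range' s (n+1)).map a) - Zc ((List.range' s n).map a) := by
  rw [Zc, Zc, Zc, range'_map_reverse, range'_map_reverse, Zrev_cons_cons]
  rfl

lemma Zc_nil' (a : ℕ → ℤ) (s : ℕ) : Zc ((List.range' s 0).map a) = 1 := rfl

lemma Zc_one (a : ℕ → ℤ) (s : ℕ) : Zc ((List.range' s 1).map a) = a s := rfl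

theorem Zrev_chain (l : List ℤ) (h : ∀ x ∈ l, 2 ≤ x) :
    1 ≤ Zrev l ∧ ∀ x : ℤ, 2 ≤ x → Zrev l + 1 ≤ Zrev (x :: l) := by
  induction l with
  | nil => refine ⟨le_refl _, fun x hx => ?_⟩; show (1:ℤ) + 1 ≤ x; omega
  | cons y m ih =>
    obtain ⟨h1, h2⟩ := ih (fun x hx => h x (List.mem_cons_of_mem _ hx))
    have hy := h y List.mem_cons_self
    have h3 := h2 y hy
    refine ⟨by omega, fun x hx => ?_⟩
    rw [Zrev_cons_cons]
    nlinarith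

theorem Zrev_coprime (l : List ℤ) : IsCoprime (Zrev l) (Zrev l.tail) := by
  induction l with
  | nil => exact isCoprime_one_left
  | cons y m ih =>
    cases m with
    | nil => simpa [Zrev] using isCoprime_one_right (x := y)
    | cons z m' =>
      rw [Zrev_cons_cons]
      show IsCoprime _ (Zrev (z :: m'))
      have : y * Zrev (z :: m') - Zrev m' = -Zrev m' + Zrev (z :: m') * y := by ring
      rw [this]
      exact (ih.symm.neg_left).add_mul_left_left y

lemma Zrev_cast : ∀ l : List ℤ, ((Zrev l : ℤ) : ℚ) = Zrev (l.map (Int.cast : ℤ → ℚ))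
  | [] => rfl
  | [x] => rfl
  | x :: y :: m => by
    have h1 : Zrev ((x:ℚ) :: (y:ℚ) :: m.map Int.cast) =
        (x:ℚ) * Zrev ((y:ℚ) :: m.map Int.cast) - Zrev (m.map Int.cast) := rfl
    have ih1 := Zrev_cast (y :: m)
    have ih2 := Zrev_cast m
    simp only [List.map_cons] at ih1 ⊢
    rw [h1, ← ih1, ← ih2, Zrev_cons_cons]
    push_cast
    ring

theorem hj_eq_div : ∀ l : List ℤ, (∀ x ∈ l, 2 ≤ x) → l ≠ [] →
    hj (l.map (Int.cast : ℤ → ℚ)) = ((Zrev l : ℤ) : ℚ) / ((Zrev l.tail : ℤ) : ℚ)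
  | [], _, hne => absurd rfl hne
  | [x], _, _ => by simp [hj, Zrev]
  | x :: y :: m, h, _ => by
    have ih := hj_eq_div (y :: m) (fun z hz => h z (List.mem_cons_of_mem _ hz)) (by simp)
    have hch := Zrev_chain (y :: m) (fun z hz => h z (List.mem_cons_of_mem _ hz))
    have hchm := Zrev_chain m (fun z hz => h z (by simp [hz]))
    have hpos : (0:ℤ) < Zrev (y :: m) := by linarith [hch.1]
    have hposm : (0:ℤ) < Zrev m := by linarith [hchm.1]
    have hQ : ((Zrev (y :: m) : ℤ) : ℚ) ≠ 0 := by positivity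
    have hQm : ((Zrev m : ℤ) : ℚ) ≠ 0 := by positivity
    show (x:ℚ) - 1 / hj (((y:ℤ)::m).map Int.cast) =
      ((Zrev (x :: y :: m) : ℤ) : ℚ) / ((Zrev ((x :: y :: m).tail) : ℤ) : ℚ)
    rw [ih]
    show _ = ((Zrev (x :: y :: m) : ℤ) : ℚ) / ((Zrev (y :: m) : ℤ) : ℚ)
    rw [Zrev_cons_cons, show (y :: m).tail = m from rfl]
    rw [one_div_div]
    push_cast
    field_simp

theorem Zrev_concat {R : Type*} [CommRing R] (x : R) :
    ∀ l : List R, l ≠ [] → Zrev (l ++ [x]) = x * Zrev l - Zrev l.dropLast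
  | [], h => absurd rfl h
  | [y], _ => by simp [Zrev]; ring
  | [y, z], _ => by simp [Zrev]; ring
  | y :: z :: u :: m, _ => by
    have ih1 := Zrev_concat x (z :: u :: m) (by simp)
    have ih2 := Zrev_concat x (u :: m) (by simp)
    simp only [List.cons_append] at ih1 ih2 ⊢
    rw [Zrev_cons_cons y, ih1, ih2, Zrev_cons_cons y z (u :: m)]
    have h1 : (y :: z :: u :: m).dropLast = y :: (z :: u :: m).dropLast := by simp
    have h2 : (z :: u :: m).dropLast = z :: (u :: m).dropLast := by simp
    rw [h1, h2, Zrev_cons_cons y z]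
    ring

theorem Zrev_reverse_aux {R : Type*} [CommRing R] :
    ∀ (n : ℕ) (l : List R), l.length ≤ n → Zrev l.reverse = Zrev l := by
  intro n
  induction n with
  | zero => intro l h; simp at h; simp [h]
  | succ n ih =>
    intro l h
    match l with
    | [] => rfl
    | [x] => rfl
    | x :: y :: m =>
      have h1 : (x :: y :: m).reverse = (y :: m).reverse ++ [x] := by simp
      rw [h1, Zrev_concat x _ (by simp),
        ih (y :: m) (by simp at h ⊢; omega),
        show (y :: m).reverse.dropLast = m.reverse by simp [List.dropLast_concat],
        ih m (by simp at h ⊢; omega), Zrev_cons_cons]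

theorem Zrev_reverse {R : Type*} [CommRing R] (l : List R) : Zrev l.reverse = Zrev l :=
  Zrev_reverse_aux l.length l le_rfl

/-- with `p/(p-q) = [a_1,…,a_r]`, the weights
`w_0 = 1`, `w_i = Z_{i-1}(a_1,…,a_{i-1}) - Z_{i-2}(a_2,…,a_{i-1})` satisfy
`1 = w_0 = w_1 ≤ w_2 ≤ ⋯ ≤ w_{r+1}` and `w_{r+1} = q`. -/
theorem weights_mono (p q : ℤ) (hq : 0 < q) (hpq : q < p) (hcop : IsCoprime p q)
    (r : ℕ) (a : ℕ → ℤ) (ha : ∀ i, 1 ≤ i → i ≤ r → 2 ≤ a i)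
    (hexp : (p : ℚ) / ((p : ℚ) - (q : ℚ)) =
      hj ((List.range' 1 r).map fun i => (a i : ℚ)))
    (w : ℕ → ℤ) (hw0 : w 0 = 1)
    (hwi : ∀ i, 1 ≤ i → i ≤ r + 1 →
      w i = Zc ((List.range' 1 (i - 1)).map a) -
        (if i = 1 then 0 else Zc ((List.range' 2 (i - 2)).map a))) :
    w 1 = 1 ∧ (∀ i, 1 ≤ i → i ≤ r → w i ≤ w (i + 1)) ∧ w (r + 1) = q := by
  have hZnil : Zc ([] : List ℤ) = 1 := rfl
  have hw1 : w 1 = 1 := by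
    rw [hwi 1 le_rfl (by omega)]
    simp [hZnil]
  have hwS : ∀ i, i + 1 ≤ r →
      w (i+2) = Zc ((List.range' 1 (i+1)).map a) - Zc ((List.range' 2 i).map a) := by
    intro i h
    rw [hwi (i+2) (by omega) (by omega), if_neg (by omega),
      show i+2-1 = i+1 from rfl, show i+2-2 = i from rfl]
  have hrec : ∀ i, 1 ≤ i → i ≤ r → w (i+1) = a i * w i - w (i-1) := by
    intro i h1 h2
    match i, h1 with
    | 1, _ =>
      rw [show (1:ℕ)+1 = 0+2 from rfl, hwS 0 (by omega), hw1, hw0, Zc_one a 1]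
      simp [hZnil]
    | 2, _ =>
      have H2 : w 2 = Zc ((List.range' 1 1).map a) - Zc ((List.range' 2 0).map a) :=
        hwS 0 (by omega)
      have H3 : w 3 = Zc ((List.range' 1 2).map a) - Zc ((List.range' 2 1).map a) :=
        hwS 1 (by omega)
      have R1 : Zc ((List.range' 1 2).map a)
          = a 2 * Zc ((List.range' 1 1).map a) - Zc ((List.range' 1 0).map a) := by
        have h := Zc_rec a 1 0
        rwa [show 1+0+1 = 2 from by omega] at h
      show w 3 = a 2 * w 2 - w 1
      rw [H3, H2, R1, hw1, Zc_one a 2, Zc_nil' a 1, Zc_nil' a 2]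
      ring
    | (k+3), _ =>
      have H4 : w (k+4) = Zc ((List.range' 1 (k+3)).map a) - Zc ((List.range' 2 (k+2)).map a) :=
        hwS (k+2) (by omega)
      have H3 : w (k+3) = Zc ((List.range' 1 (k+2)).map a) - Zc ((List.range' 2 (k+1)).map a) :=
        hwS (k+1) (by omega)
      have H2 : w (k+2) = Zc ((List.range' 1 (k+1)).map a) - Zc ((List.range' 2 k).map a) :=
        hwS k (by omega)
      have R1 : Zc ((List.range' 1 (k+3)).map a)
          = a (k+3) * Zc ((List.range' 1 (k+2)).map a) - Zc ((List.range' 1 (k+1)).map a) := by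
        have h := Zc_rec a 1 (k+1)
        rwa [show 1+(k+1)+1 = k+3 from by omega] at h
      have R2 : Zc ((List.range' 2 (k+2)).map a)
          = a (k+3) * Zc ((List.range' 2 (k+1)).map a) - Zc ((List.range' 2 k).map a) := by
        have h := Zc_rec a 2 k
        rwa [show 2+k+1 = k+3 from by omega] at h
      show w (k+4) = a (k+3) * w (k+3) - w (k+2)
      rw [H4, H3, H2, R1, R2]
      ring
  have key : ∀ i, i ≤ r → 1 ≤ w i ∧ w i ≤ w (i+1) := by
    intro i
    induction i with
    | zero => intro _; rw [hw0, hw1]; exact ⟨le_rfl, le_rfl⟩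
    | succ n ih =>
      intro hn
      obtain ⟨ih1, ih2⟩ := ih (by omega)
      have h1 : 1 ≤ w (n+1) := le_trans ih1 ih2
      refine ⟨h1, ?_⟩
      have hr := hrec (n+1) (by omega) hn
      have ha' := ha (n+1) (by omega) hn
      simp only [show n+1-1 = n from rfl] at hr
      nlinarith
  refine ⟨hw1, fun i h1 h2 => (key i h2).2, ?_⟩
  rcases Nat.eq_zero_or_pos r with hr0 | hrpos
  · exfalso
    subst hr0
    have hp0 : (0:ℚ) < (p:ℚ) := by exact_mod_cast (lt_trans hq hpq)
    have hpq0 : (0:ℚ) < (p:ℚ) - (q:ℚ) := by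
      have h' : (q:ℚ) < (p:ℚ) := by exact_mod_cast hpq
      linarith
    have hd := div_pos hp0 hpq0
    rw [hexp] at hd
    simp [hj] at hd
  · have hL : ((List.range' 1 r).map fun i => ((a i : ℚ)))
        = ((List.range' 1 r).map a).map (Int.cast : ℤ → ℚ) := by
      rw [List.map_map]; rfl
    set L : List ℤ := (List.range' 1 r).map a with hLdef
    have hmem : ∀ x ∈ L, 2 ≤ x := by
      intro x hx
      simp only [hLdef, List.mem_map] at hx
      obtain ⟨j, hj', rfl⟩ := hx
      rw [List.mem_range'_1] at hj'
      exact ha j hj'.1 (by omega)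
    have hne : L ≠ [] := by
      simp only [hLdef]
      intro hcon
      rw [List.map_eq_nil_iff, List.range'_eq_nil_iff] at hcon
      omega
    have hdiv := hj_eq_div L hmem hne
    rw [← hL, ← hexp] at hdiv
    obtain ⟨x, m, hxm⟩ := List.exists_cons_of_ne_nil hne
    have hchain := Zrev_chain m (by
      intro z hz; exact hmem z (by rw [hxm]; exact List.mem_cons_of_mem _ hz))
    have hD1 : 1 ≤ Zrev L.tail := by rw [hxm]; exact hchain.1
    have hND : Zrev L.tail + 1 ≤ Zrev L := by
      rw [hxm]
      exact hchain.2 x (hmem x (by rw [hxm]; exact List.mem_cons_self))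
    have hcross : p * Zrev L.tail = Zrev L * (p - q) := by
      have hD0 : ((Zrev L.tail : ℤ) : ℚ) ≠ 0 := by
        rw [Int.cast_ne_zero]; omega
      have hpq0 : ((p:ℚ) - (q:ℚ)) ≠ 0 := by
        have h' : (q:ℚ) < (p:ℚ) := by exact_mod_cast hpq
        linarith
      rw [div_eq_div_iff hpq0 hD0] at hdiv
      exact_mod_cast hdiv
    have hcop2 : IsCoprime p (p - q) := by
      have h' := (hcop.neg_right).add_mul_left_right 1
      rwa [show -q + p * 1 = p - q from by ring] at h'
    have hNdvd : Zrev L ∣ p :=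
      (Zrev_coprime L).dvd_of_dvd_mul_right ⟨p - q, hcross⟩
    have hpdvd : p ∣ Zrev L :=
      hcop2.dvd_of_dvd_mul_right ⟨Zrev L.tail, hcross.symm⟩
    have hNp : Zrev L = p := Int.dvd_antisymm (by omega) (by omega) hNdvd hpdvd
    have hDpq : Zrev L.tail = p - q := by
      have h' := hcross
      rw [hNp] at h'
      exact mul_left_cancel₀ (by omega) h'
    obtain ⟨m', rfl⟩ : ∃ m', r = m' + 1 := ⟨r - 1, by omega⟩
    have hw : w (m'+2) = Zc ((List.range' 1 (m'+1)).map a) - Zc ((List.range' 2 m').map a) :=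
      hwS m' (by omega)
    have hZcN : Zc ((List.range' 1 (m'+1)).map a) = Zrev L := by
      rw [Zc, Zrev_reverse, hLdef]
    have htail : L.tail = (List.range' 2 m').map a := by
      rw [hLdef, List.range'_succ]
      rfl
    have hZcD : Zc ((List.range' 2 m').map a) = Zrev L.tail := by
      rw [Zc, Zrev_reverse, ← htail]
    show w (m'+2) = q
    rw [hw, hZcN, hZcD, hNp, hDpq]
    ring
end

section
/- Let K be a field, let a_1, …, a_r be positive integers, and let z_0, z_1, …, z_{r+1} ∈ K satisfy z_0 ≠ 0, z_1 ≠ 0, and z_{i-1}·z_{i+1} = z_i^{a_i} for all 1 ≤ i ≤ r. Then for every 1 ≤ i ≤ r+1 one has z_i · z_0^{Z_{i-2}(a_2, …, a_{i-1})} = z_1^{Z_{i-1}(a_1, …, a_{i-1})} (equivalently, z_i = z_1^{Z_{i-1}(a_1,…,a_{i-1})} · z_0^{−Z_{i-2}(a_2,…,a_{i-1})}). -/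
lemma Zc_concat {R : Type*} [CommRing R] (l : List R) (x y : R) :
    Zc (l ++ [y, x]) = x * Zc (l ++ [y]) - Zc l := by
  unfold Zc
  rw [show l ++ [y, x] = (l ++ [y]) ++ [x] by simp, List.reverse_append,
    List.reverse_append]
  simp only [List.reverse_singleton, List.singleton_append, List.cons_append,
    List.nil_append]
  rfl

lemma zem_step {K : Type*} [Field K] {z0 z1 x y w : K} (n : ℕ) (p q p' q' : ℤ)
    (hz0 : z0 ≠ 0) (hz1 : z1 ≠ 0) (hx : x ≠ 0)
    (hA : x * z0 ^ q' = z1 ^ p') (hB : y * z0 ^ q = z1 ^ p)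
    (hC : x * w = y ^ n) :
    w * z0 ^ ((n : ℤ) * q - q') = z1 ^ ((n : ℤ) * p - p') := by
  have hw : w = y ^ n / x := by rw [eq_div_iff hx, mul_comm]; exact hC
  have e1 : (y * z0 ^ q) ^ (n : ℤ) = (z1 ^ p) ^ (n : ℤ) := by rw [hB]
  rw [mul_zpow, ← zpow_mul, ← zpow_mul, zpow_natCast] at e1
  rw [zpow_sub₀ hz0, zpow_sub₀ hz1, hw, mul_comm ((n:ℤ)) q, mul_comm ((n:ℤ)) p,
    ← e1, ← hA]
  field_simp

/-- if `z_0 ≠ 0`, `z_1 ≠ 0` and `z_{i-1} z_{i+1} = z_i^{a_i}` for `1 ≤ i ≤ r`,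
then `z_i · z_0^{Z_{i-2}(a_2,…,a_{i-1})} = z_1^{Z_{i-1}(a_1,…,a_{i-1})}` for `1 ≤ i ≤ r+1`. -/
theorem z_eq_monomial {K : Type*} [Field K] (r : ℕ) (a : ℕ → ℕ)
    (ha : ∀ i, 1 ≤ i → i ≤ r → 0 < a i)
    (z : ℕ → K) (hz0 : z 0 ≠ 0) (hz1 : z 1 ≠ 0)
    (hrec : ∀ i, 1 ≤ i → i ≤ r → z (i - 1) * z (i + 1) = z i ^ a i) :
    ∀ i, 1 ≤ i → i ≤ r + 1 →
      z i * z 0 ^ (if i = 1 then (0 : ℤ)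
          else Zc ((List.range' 2 (i - 2)).map fun j => (a j : ℤ)))
        = z 1 ^ Zc ((List.range' 1 (i - 1)).map fun j => (a j : ℤ)) := by
  intro i
  induction i using Nat.strong_induction_on with
  | _ i IH =>
  intro hi1 hir
  match i, hi1 with
  | 1, _ => simp [Zc, Zrev]
  | 2, _ =>
      have h1 : z 0 * z 2 = z 1 ^ a 1 := hrec 1 le_rfl (by omega)
      rw [if_neg (by norm_num)]
      simpa [Zc, Zrev, List.range', mul_comm] using h1
  | (k+3), _ =>
      have hk : k + 2 ≤ r := by omega
      have IH2 := IH (k+2) (by omega) (by omega) (by omega)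
      have IH1 := IH (k+1) (by omega) (by omega) (by omega)
      rw [if_neg (by omega)] at IH2
      have hC := hrec (k+2) (by omega) hk
      simp only [show k + 2 - 1 = k + 1 from rfl] at hC
      have hx : z (k+1) ≠ 0 := by
        intro h
        rw [h, zero_mul] at IH1
        exact zpow_ne_zero _ hz1 IH1.symm
      set a' : ℕ → ℤ := fun j => (a j : ℤ) with ha'
      have hP : Zc ((List.range' 1 (k + 3 - 1)).map a')
          = a' (k+2) * Zc ((List.range' 1 (k+1)).map a')
            - Zc ((List.range' 1 (k+1-1)).map a') := by
        have h2 : List.range' 1 (k+2) = List.range' 1 k ++ [(1+k), (1+k+1)] := by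
          rw [List.range'_concat, List.range'_concat]; simp; omega
        rw [show k + 3 - 1 = k + 2 from rfl, h2, List.map_append,
          show List.range' 1 (k+1) = List.range' 1 k ++ [1+k] from by
            rw [List.range'_concat]; simp,
          show k + 1 - 1 = k from rfl, List.map_append]
        simp only [List.map_cons, List.map_nil]
        rw [show 1+k+1 = k+2 by omega]
        exact Zc_concat ((List.range' 1 k).map a') (a' (k+2)) (a' (1+k))
      have hQ : Zc ((List.range' 2 (k + 3 - 2)).map a')
          = a' (k+2) * Zc ((List.range' 2 (k+2-2)).map a')
            - (if k + 1 = 1 then (0:ℤ) else Zc ((List.range' 2 (k+1-2)).map a')) := by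
        match k with
        | 0 => simp [Zc, Zrev, List.range']
        | (m+1) =>
            rw [if_neg (by omega)]
            have h2 : List.range' 2 (m+2) = List.range' 2 m ++ [(2+m), (2+m+1)] := by
              rw [List.range'_concat, List.range'_concat]; simp; omega
            rw [show m + 1 + 3 - 2 = m + 2 from rfl, show m+1+2-2 = m+1 from rfl,
              show m+1+1-2 = m from rfl, h2, List.map_append,
              show List.range' 2 (m+1) = List.range' 2 m ++ [2+m] from by
                rw [List.range'_concat]; simp,
              List.map_append]
            simp only [List.map_cons, List.map_nil]
            rw [show 2+m+1 = m+1+2 by omega]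
            exact Zc_concat ((List.range' 2 m).map a') (a' (m+1+2)) (a' (2+m))
      rw [if_neg (by omega), hQ, hP]
      exact zem_step (a (k+2)) _ _ _ _ hz0 hz1 hx IH1 IH2 hC
end

section
/- Let a = (a_1, …, a_r) with all a_i ≥ 2 integers, and let k = (k_1, …, k_r) ∈ ℕ^r be admissible with Z_r(k_1, …, k_r) = 0 and k_i ≤ a_i for all i. Then there exist polynomials P_0, P_1, …, P_{r+1} in ℤ[t, z_0, z_1] with P_0 = 1 and P_1 = z_1, satisfying the inductive relations P_{i-1}·P_{i+1} = P_i^{a_i} + t·P_i^{k_i}·z_0^{(a_i − k_i)·Z_{i-2}(a_2, …, a_{i-1})} for all 1 ≤ i ≤ r, and such that z_0 does not divide P_i for any i. (In particular, in the fraction field the elements z_i := z_0^{−Z_{i-2}(a_2,…,a_{i-1})}·P_i solve the deformed equations z_{i-1}z_{i+1} = z_i^{a_i} + t·z_i^{k_i}.) -/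
def W (k : ℕ → ℕ) (j : ℕ) : ℕ → ℤ
  | 0 => 1
  | 1 => (k j : ℤ)
  | (L+2) => (k (j+L+1) : ℤ) * W k j (L+1) - W k j L

def Eexp (a : ℕ → ℕ) (i : ℕ) : ℕ :=
  if i = 1 then 0 else (Zc ((List.range' 2 (i-2)).map fun j => (a j : ℤ))).toNat

open MvPolynomial in
noncomputable def Flist (a k : ℕ → ℕ) : ℕ → List (MvPolynomial (Fin 3) ℤ)
  | 0 => []
  | 1 => [X 2]
  | (n+2) => Flist a k (n+1) ++
      [(∏ j ∈ Finset.Icc 1 (n+1), ((Flist a k (n+1)).getD (j-1) 1) ^ (W k j (n+1-j)).toNat)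
          ^ (a (n+1) - k (n+1))
        + X 0 * X 1 ^ ((a (n+1) - k (n+1)) * Eexp a (n+1))]

noncomputable def F (a k : ℕ → ℕ) (i : ℕ) : MvPolynomial (Fin 3) ℤ :=
  (Flist a k i).getD (i-1) 1

noncomputable def Pp (a k : ℕ → ℕ) (m : ℕ) : MvPolynomial (Fin 3) ℤ :=
  ∏ j ∈ Finset.Icc 1 m, F a k j ^ (W k j (m-j)).toNat

lemma Flist_length (a k : ℕ → ℕ) : ∀ n, (Flist a k n).length = n
  | 0 => rfl
  | 1 => rfl
  | (n+2) => by rw [Flist]; simp [Flist_length a k (n+1)]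

lemma Flist_succ (a k : ℕ → ℕ) (n : ℕ) (hn : 1 ≤ n) :
    Flist a k (n+1) = Flist a k n ++
      [(∏ j ∈ Finset.Icc 1 n, ((Flist a k n).getD (j-1) 1) ^ (W k j (n-j)).toNat)
          ^ (a n - k n)
        + MvPolynomial.X 0 * MvPolynomial.X 1 ^ ((a n - k n) * Eexp a n)] := by
  obtain ⟨m, rfl⟩ := Nat.exists_eq_add_of_le' hn
  rw [Flist]

lemma Fstable (a k : ℕ → ℕ) : ∀ n j, 1 ≤ j → j ≤ n →
    (Flist a k n).getD (j-1) 1 = F a k j := by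
  intro n
  induction n with
  | zero => intro j h1 h2; omega
  | succ n ih =>
    intro j h1 h2
    rcases Nat.lt_or_ge j (n+1) with h | h
    · have hn : 1 ≤ n := by omega
      rw [Flist_succ a k n hn, List.getD_append _ _ _ _ (by rw [Flist_length]; omega)]
      exact ih j h1 (by omega)
    · have : j = n + 1 := by omega
      subst this; rfl

lemma F_one (a k : ℕ → ℕ) : F a k 1 = MvPolynomial.X 2 := rfl

lemma F_succ (a k : ℕ → ℕ) (n : ℕ) (hn : 1 ≤ n) :
    F a k (n+1) = (Pp a k n) ^ (a n - k n)
      + MvPolynomial.X 0 * MvPolynomial.X 1 ^ ((a n - k n) * Eexp a n) := by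
  rw [F, Flist_succ a k n hn]
  rw [show n + 1 - 1 = (Flist a k n).length by rw [Flist_length]; omega]
  rw [List.getD_append_right _ _ _ _ le_rfl, Nat.sub_self]
  simp only [List.getD_cons_zero]
  congr 2
  refine Finset.prod_congr rfl fun j hj => ?_
  simp only [Finset.mem_Icc] at hj
  rw [Fstable a k n j hj.1 hj.2]

noncomputable def evp : MvPolynomial (Fin 3) ℤ →+* ℤ :=
  MvPolynomial.eval (fun v : Fin 3 => if v = 0 then 1 else if v = 1 then 0 else 2)

lemma one_le_evp_F (a k : ℕ → ℕ) : ∀ n, 1 ≤ evp (F a k n) := by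
  intro n
  induction n using Nat.strong_induction_on with
  | _ n ih =>
  match n with
  | 0 => rw [show F a k 0 = 1 from rfl, map_one]
  | 1 =>
    rw [F_one]
    rw [show evp (MvPolynomial.X 2) = 2 from by simp [evp]]
    norm_num
  | (m+2) =>
    rw [F_succ a k (m+1) (by omega)]
    rw [map_add, map_mul, map_pow, map_pow]
    have hX0 : evp (MvPolynomial.X 0) = 1 := by simp [evp]
    have hX1 : evp (MvPolynomial.X 1) = 0 := by simp [evp]
    rw [hX0, hX1, one_mul]
    have hP : 1 ≤ evp (Pp a k (m+1)) := by
      rw [Pp, map_prod]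
      calc (1:ℤ) = ∏ _j ∈ Finset.Icc 1 (m+1), 1 := Finset.prod_const_one.symm
      _ ≤ _ := by
        refine Finset.prod_le_prod (fun _ _ => zero_le_one) fun j hj => ?_
        rw [map_pow]
        calc (1:ℤ) = 1 ^ (W k j (m+1-j)).toNat := (one_pow _).symm
        _ ≤ _ := by
          refine pow_le_pow_left₀ one_pos.le ?_ _
          refine ih j ?_
          simp only [Finset.mem_Icc] at hj
          omega
    have h1 : (1:ℤ) ≤ evp (Pp a k (m+1)) ^ (a (m+1) - k (m+1)) := by
      calc (1:ℤ) = 1 ^ (a (m+1) - k (m+1)) := (one_pow _).symm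
      _ ≤ _ := pow_le_pow_left₀ one_pos.le hP _
    have h2 : (0:ℤ) ≤ (0:ℤ) ^ ((a (m+1) - k (m+1)) * Eexp a (m+1)) := by positivity
    linarith

lemma one_le_evp_Pp (a k : ℕ → ℕ) (m : ℕ) : 1 ≤ evp (Pp a k m) := by
  rw [Pp, map_prod]
  calc (1:ℤ) = ∏ _j ∈ Finset.Icc 1 m, 1 := Finset.prod_const_one.symm
  _ ≤ _ := by
    refine Finset.prod_le_prod (fun _ _ => zero_le_one) fun j _ => ?_
    rw [map_pow]
    calc (1:ℤ) = 1 ^ (W k j (m-j)).toNat := (one_pow _).symm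
    _ ≤ _ := pow_le_pow_left₀ one_pos.le (one_le_evp_F a k j) _

lemma triMat_mulVec {n : ℕ} (c x : Fin n → ℝ) (p : Fin n) :
    (triMat c).mulVec x p =
      c p * x p
        - (if _ : 1 ≤ p.1 then x ⟨p.1-1, Nat.lt_of_le_of_lt (Nat.sub_le p.1 1) p.2⟩ else 0)
        - (if h : p.1+1 < n then x ⟨p.1+1, h⟩ else 0) := by
  have hrw : ∀ q : Fin n, triMat c p q * x q =
      (if q = p then c p * x p else 0) +
      ((if q.1+1 = p.1 then -x q else 0) + (if q.1 = p.1+1 then -x q else 0)) := by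
    intro q
    rcases eq_or_ne q p with rfl | hne
    · simp only [triMat, Matrix.of_apply]
      simp only [if_true]
      rw [if_neg (show ¬(q.1+1 = q.1) by omega), if_neg (show ¬(q.1 = q.1+1) by omega)]
      ring
    · have hne' : p ≠ q := Ne.symm hne
      simp only [triMat, Matrix.of_apply, if_neg hne', if_neg hne]
      by_cases h2 : q.1+1 = p.1
      · rw [if_pos h2, if_pos (Or.inr h2), if_neg (show ¬(q.1 = p.1+1) by omega)]
        ring
      · by_cases h3 : q.1 = p.1+1
        · rw [if_pos h3, if_pos (Or.inl h3.symm), if_neg h2]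
          ring
        · rw [if_neg h2, if_neg h3,
            if_neg (show ¬(p.1+1 = q.1 ∨ q.1+1 = p.1) by omega)]
          ring
  have hdot : (triMat c).mulVec x p = ∑ q, triMat c p q * x q := rfl
  rw [hdot, Finset.sum_congr rfl (fun q _ => hrw q), Finset.sum_add_distrib,
    Finset.sum_add_distrib]
  have s1 : (∑ q : Fin n, if q = p then c p * x p else 0) = c p * x p := by
    rw [Finset.sum_ite_eq' Finset.univ p (fun _ => c p * x p), if_pos (Finset.mem_univ p)]
  have s2 : (∑ q : Fin n, if q.1+1 = p.1 then -x q else 0)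
      = -(if _ : 1 ≤ p.1 then x ⟨p.1-1, Nat.lt_of_le_of_lt (Nat.sub_le p.1 1) p.2⟩ else 0) := by
    by_cases hp : 1 ≤ p.1
    · rw [dif_pos hp]
      rw [Finset.sum_eq_single (⟨p.1-1, Nat.lt_of_le_of_lt (Nat.sub_le p.1 1) p.2⟩ : Fin n)]
      · rw [if_pos (show p.1-1+1 = p.1 by omega)]
      · intro b _ hb
        rw [if_neg]
        intro hc
        exact hb (Fin.ext (show (b:ℕ) = p.1-1 by omega))
      · intro h; exact absurd (Finset.mem_univ _) h
    · rw [dif_neg hp, Finset.sum_eq_zero, neg_zero]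
      intro q _
      rw [if_neg (by omega)]
  have s3 : (∑ q : Fin n, if q.1 = p.1+1 then -x q else 0)
      = -(if h : p.1+1 < n then x ⟨p.1+1, h⟩ else 0) := by
    by_cases hp : p.1+1 < n
    · rw [dif_pos hp]
      rw [Finset.sum_eq_single (⟨p.1+1, hp⟩ : Fin n)]
      · rw [if_pos rfl]
      · intro b _ hb
        rw [if_neg]
        intro hc
        exact hb (Fin.ext (by simpa using hc))
      · intro h; exact absurd (Finset.mem_univ _) h
    · rw [dif_neg hp, Finset.sum_eq_zero, neg_zero]
      intro q _
      rw [if_neg (by have := q.2; omega)]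
  rw [s1, s2, s3]
  ring

lemma wnn (r : ℕ) (k : ℕ → ℕ)
    (hps : (triMat fun i : Fin r => (k (i.1+1) : ℝ)).PosSemidef) :
    ∀ L j, 1 ≤ j → j + L ≤ r + 1 → 0 ≤ W k j L := by
  intro L
  induction L using Nat.strong_induction_on with
  | _ L ih =>
  match L with
  | 0 => intro j _ _; norm_num [W]
  | 1 => intro j _ _; simp only [W]; positivity
  | (L'+2) =>
    intro j hj hjr
    by_contra hneg
    push_neg at hneg
    have hA : 0 ≤ W k j L' := ih L' (by omega) j hj (by omega)
    have hB : 0 ≤ W k j (L'+1) := ih (L'+1) (by omega) j hj (by omega)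
    have hrec : W k j (L'+2) = (k (j+L'+1) : ℤ) * W k j (L'+1) - W k j L' := rfl
    have hkB : 0 ≤ (k (j+L'+1) : ℤ) * W k j (L'+1) :=
      mul_nonneg (by positivity) hB
    have hApos : 0 < W k j L' := by rw [hrec] at hneg; linarith
    have hArpos : (0:ℝ) < ((W k j L' : ℤ) : ℝ) := by exact_mod_cast hApos
    have hBrnn : (0:ℝ) ≤ ((W k j (L'+1) : ℤ) : ℝ) := by exact_mod_cast hB
    have hnegr : (k (j+L'+1) : ℝ) * ((W k j (L'+1) : ℤ) : ℝ) - ((W k j L' : ℤ) : ℝ) < 0 := by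
      rw [hrec] at hneg
      have h' : ((k (j+L'+1) : ℤ) : ℝ) * ((W k j (L'+1) : ℤ) : ℝ) - ((W k j L' : ℤ) : ℝ) < 0 := by
        exact_mod_cast hneg
      simpa using h'
    have hQg : ∀ s : ℝ, 0 ≤ ((W k j L' : ℤ) : ℝ) * (((W k j (L'+1) : ℤ) : ℝ) - s)
        + s * ((k (j+L'+1) : ℝ) * s - ((W k j L' : ℤ) : ℝ)) := by
      intro s
      set x : Fin (L'+2) → ℝ :=
        fun p => if p.1 ≤ L' then ((W k j p.1 : ℤ) : ℝ) else s with hx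
      set c : Fin (L'+2) → ℝ := fun p => (k (j + p.1) : ℝ) with hc
      have hcv : ∀ p : Fin (L'+2), c p = (k (j + p.1) : ℝ) := fun p => by rw [hc]
      let e : Fin (L'+2) → Fin r := fun p => ⟨j - 1 + p.1, by have := p.2; omega⟩
      have hsub := hps.submatrix e
      have hmat : (triMat fun i : Fin r => (k (i.1+1) : ℝ)).submatrix e e = triMat c := by
        ext p q
        simp only [Matrix.submatrix_apply, triMat, Matrix.of_apply]
        by_cases hpq : p = q
        · subst hpq
          rw [if_pos rfl, if_pos rfl]
          rw [hcv p]
          exact congrArg (fun t => ((k t : ℕ) : ℝ)) (by simp only [e, Fin.val_mk]; omega)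
        · have hepq : e p ≠ e q := by
            intro h
            have h' : j - 1 + p.1 = j - 1 + q.1 := congrArg Fin.val h
            exact hpq (Fin.ext (by omega))
          rw [if_neg hepq, if_neg hpq]
          refine if_congr ?_ rfl rfl
          show j - 1 + p.1 + 1 = j - 1 + q.1 ∨ j - 1 + q.1 + 1 = j - 1 + p.1 ↔ _
          omega
      have hpsd := hsub.dotProduct_mulVec_nonneg x
      rw [hmat] at hpsd
      have hstar : star x = x := funext fun p => star_trivial _
      rw [hstar] at hpsd
      -- row values
      have hrow0 : ∀ p : Fin (L'+2), p.1 + 1 ≤ L' → (triMat c).mulVec x p = 0 := by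
        intro p hpL
        rw [triMat_mulVec]
        have hxp : x p = ((W k j p.1 : ℤ) : ℝ) := by
          rw [hx]; exact if_pos (by omega)
        have hright : (if h : p.1+1 < L'+2 then x ⟨p.1+1, h⟩ else 0)
            = ((W k j (p.1+1) : ℤ) : ℝ) := by
          rw [dif_pos (by omega : p.1+1 < L'+2)]
          rw [hx]; exact if_pos (show p.1+1 ≤ L' by omega)
        rw [hxp, hright, hcv p]
        rcases Nat.eq_zero_or_pos p.1 with h0 | h1
        · rw [dif_neg (by omega)]
          rw [h0]
          norm_num [W]
        · rw [dif_pos (by omega : 1 ≤ p.1)]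
          have hleft : x ⟨p.1-1, Nat.lt_of_le_of_lt (Nat.sub_le p.1 1) p.2⟩
              = ((W k j (p.1-1) : ℤ) : ℝ) := by
            rw [hx]; exact if_pos (show p.1-1 ≤ L' by omega)
          rw [hleft]
          obtain ⟨m, hm⟩ : ∃ m, p.1 = m+1 := ⟨p.1-1, by omega⟩
          rw [hm]
          have hr2 : W k j (m+1+1) = (k (j+m+1) : ℤ) * W k j (m+1) - W k j m := rfl
          have hmm : m+1-1 = m := by omega
          have hjm : j + (m+1) = j + m + 1 := by omega
          rw [hmm, hjm, hr2]
          push_cast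
          ring
      -- the two special points
      have hL2 : L' < L'+2 := by omega
      have hT2 : L'+1 < L'+2 := by omega
      set pL : Fin (L'+2) := ⟨L', hL2⟩ with hpL
      set pT : Fin (L'+2) := ⟨L'+1, hT2⟩ with hpT
      have hxL : x pL = ((W k j L' : ℤ) : ℝ) := by
        rw [hx]; exact if_pos (show L' ≤ L' from le_refl L')
      have hxT : x pT = s := by
        rw [hx]; exact if_neg (show ¬ (L'+1 ≤ L') by omega)
      have hrowL : (triMat c).mulVec x pL = ((W k j (L'+1) : ℤ) : ℝ) - s := by
        rw [triMat_mulVec]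
        have hcL : c pL = (k (j + L') : ℝ) := hcv pL
        have hright : (if h : pL.1+1 < L'+2 then x ⟨pL.1+1, h⟩ else 0) = s := by
          rw [dif_pos (show pL.1+1 < L'+2 from hT2)]
          rw [hx]; exact if_neg (show ¬ (L'+1 ≤ L') by omega)
        rw [hxL, hright, hcL]
        rcases Nat.eq_zero_or_pos L' with h0 | h1
        · rw [dif_neg (show ¬ (1 ≤ pL.1) from by show ¬ (1 ≤ L'); omega)]
          subst h0
          norm_num [W]
        · rw [dif_pos (show 1 ≤ pL.1 from h1)]
          have hleft : x ⟨pL.1-1, Nat.lt_of_le_of_lt (Nat.sub_le pL.1 1) pL.2⟩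
              = ((W k j (L'-1) : ℤ) : ℝ) := by
            rw [hx]; exact if_pos (show L'-1 ≤ L' from Nat.sub_le L' 1)
          rw [hleft]
          obtain ⟨m, hm⟩ : ∃ m, L' = m+1 := ⟨L'-1, by omega⟩
          have hr2 : W k j (m+1+1) = (k (j+m+1) : ℤ) * W k j (m+1) - W k j m := rfl
          rw [hm]
          have hmm : m+1-1 = m := by omega
          have hjm : j + (m+1) = j + m + 1 := by omega
          rw [hmm, hjm, hr2]
          push_cast
          ring
      have hrowT : (triMat c).mulVec x pT = (k (j+L'+1) : ℝ) * s - ((W k j L' : ℤ) : ℝ) := by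
        rw [triMat_mulVec]
        have hcT : c pT = (k (j + (L'+1)) : ℝ) := hcv pT
        have hright : (if h : pT.1+1 < L'+2 then x ⟨pT.1+1, h⟩ else 0) = 0 := by
          rw [dif_neg (show ¬ (pT.1+1 < L'+2) from by show ¬ (L'+1+1 < L'+2); omega)]
        have hleft' : (if _ : 1 ≤ pT.1 then
            x ⟨pT.1-1, Nat.lt_of_le_of_lt (Nat.sub_le pT.1 1) pT.2⟩ else 0)
            = ((W k j L' : ℤ) : ℝ) := by
          rw [dif_pos (show 1 ≤ pT.1 from by show 1 ≤ L'+1; omega)]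
          rw [hx]; exact if_pos (show L'+1-1 ≤ L' by omega)
        rw [hxT, hright, hleft', hcT]
        have hjm : j + (L'+1) = j + L' + 1 := by omega
        rw [hjm]
        ring
      -- assemble the quadratic form
      have hd : dotProduct x ((triMat c).mulVec x) = ∑ p, x p * (triMat c).mulVec x p := rfl
      have hsplit : ∑ p, x p * (triMat c).mulVec x p
          = x pL * (triMat c).mulVec x pL + x pT * (triMat c).mulVec x pT := by
        rw [← Finset.sum_subset (Finset.subset_univ ({pL, pT} : Finset (Fin (L'+2))))]
        · rw [Finset.sum_pair (Fin.ne_of_val_ne (show pL.1 ≠ pT.1 from by show L' ≠ L'+1; omega))]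
        · intro p _ hp
          simp only [Finset.mem_insert, Finset.mem_singleton] at hp
          push_neg at hp
          have h1 : p.1 ≠ L' := fun h => hp.1 (Fin.ext h)
          have h2 : p.1 ≠ L'+1 := fun h => hp.2 (Fin.ext h)
          have h3 : p.1 + 1 ≤ L' := by have := p.2; omega
          rw [hrow0 p h3, mul_zero]
      rw [hd, hsplit, hxL, hxT, hrowL, hrowT] at hpsd
      linarith [hpsd]
    -- now derive the contradiction
    rcases Nat.eq_zero_or_pos (k (j+L'+1)) with hk0 | hkpos
    · have h1 := hQg (((W k j (L'+1) : ℤ) : ℝ) + 1)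
      rw [hk0] at h1 hnegr
      push_cast at h1 hnegr
      nlinarith [h1, hArpos, hBrnn, hnegr]
    · have hkr : (0:ℝ) < (k (j+L'+1) : ℝ) := by exact_mod_cast hkpos
      have h1 := hQg (((W k j L' : ℤ) : ℝ) / (k (j+L'+1) : ℝ))
      have h2 : (k (j+L'+1) : ℝ) * (((W k j L' : ℤ) : ℝ) / (k (j+L'+1) : ℝ))
          = ((W k j L' : ℤ) : ℝ) := by
        field_simp
      rw [h2] at h1
      have h3 : 0 ≤ ((W k j L' : ℤ) : ℝ) * (((W k j (L'+1) : ℤ) : ℝ)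
          - ((W k j L' : ℤ) : ℝ) / (k (j+L'+1) : ℝ)) := by simpa using h1
      have h4 : ((W k j L' : ℤ) : ℝ) / (k (j+L'+1) : ℝ) ≤ ((W k j (L'+1) : ℤ) : ℝ) := by
        nlinarith [h3, hArpos]
      rw [div_le_iff₀ hkr] at h4
      nlinarith [h4, hArpos, hnegr]

/-- for `a_i ≥ 2` and `k ∈ K_r(a)` (admissible, representing `0`, `k ≤ a`),
there exist polynomials `P_i ∈ ℤ[t,z_0,z_1]` (here `t = X 0`, `z_0 = X 1`, `z_1 = X 2`) with
`P_0 = 1`, `P_1 = z_1`,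
`P_{i-1}P_{i+1} = P_i^{a_i} + t·P_i^{k_i}·z_0^{(a_i-k_i)·Z_{i-2}(a_2,…,a_{i-1})}`,
and `z_0 ∤ P_i` for all `i`. -/
theorem exists_P_polys (r : ℕ) (a k : ℕ → ℕ)
    (ha : ∀ i, 1 ≤ i → i ≤ r → 2 ≤ a i)
    (hk : ∀ i, 1 ≤ i → i ≤ r → k i ≤ a i)
    (hadm : Admissible fun i : Fin r => k (i.1 + 1))
    (hk0 : Zc ((List.range' 1 r).map fun i => (k i : ℤ)) = 0) :
    ∃ P : ℕ → MvPolynomial (Fin 3) ℤ,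
      P 0 = 1 ∧ P 1 = MvPolynomial.X 2 ∧
      (∀ i, 1 ≤ i → i ≤ r →
        P (i - 1) * P (i + 1) =
          P i ^ a i +
            MvPolynomial.X 0 * P i ^ k i *
              MvPolynomial.X 1 ^
                ((a i - k i) *
                  (if i = 1 then 0
                    else (Zc ((List.range' 2 (i - 2)).map fun j => (a j : ℤ))).toNat))) ∧
      (∀ i, i ≤ r + 1 → ¬ MvPolynomial.X 1 ∣ P i) := by
  have hPSD : (triMat fun i : Fin r => (k (i.1+1) : ℝ)).PosSemidef := hadm.1
  refine ⟨Pp a k, ?_, ?_, ?_, ?_⟩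
  · rw [Pp, show Finset.Icc 1 0 = (∅ : Finset ℕ) from Finset.Icc_eq_empty (by omega),
      Finset.prod_empty]
  · rw [Pp, Finset.Icc_self, Finset.prod_singleton, F_one]
    norm_num [W]
  · intro i h1 hir
    obtain ⟨m, rfl⟩ : ∃ m, i = m + 1 := ⟨i - 1, by omega⟩
    have hE : (if m + 1 = 1 then 0
        else (Zc ((List.range' 2 (m + 1 - 2)).map fun j => (a j : ℤ))).toNat)
        = Eexp a (m+1) := rfl
    rw [hE]
    have hFs : F a k (m+1+1) = (Pp a k (m+1)) ^ (a (m+1) - k (m+1))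
        + MvPolynomial.X 0 * MvPolynomial.X 1 ^ ((a (m+1) - k (m+1)) * Eexp a (m+1)) :=
      F_succ a k (m+1) (by omega)
    have hki : k (m+1) + (a (m+1) - k (m+1)) = a (m+1) := by
      have := hk (m+1) h1 hir; omega
    have hRHS : Pp a k (m+1) ^ a (m+1)
        + MvPolynomial.X 0 * Pp a k (m+1) ^ k (m+1)
          * MvPolynomial.X 1 ^ ((a (m+1) - k (m+1)) * Eexp a (m+1))
        = Pp a k (m+1) ^ k (m+1) * F a k (m+1+1) := by
      rw [hFs, mul_add, ← pow_add, hki]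
      ring
    rw [show m + 1 - 1 = m by omega, hRHS]
    have hsplit : Pp a k (m+1+1)
        = (∏ j ∈ Finset.Icc 1 (m+1), F a k j ^ (W k j (m+1+1-j)).toNat) * F a k (m+1+1) := by
      rw [Pp, Finset.prod_Icc_succ_top (by omega : 1 ≤ m+1+1)]
      rw [show m+1+1-(m+1+1) = 0 by omega]
      norm_num [W]
    rw [hsplit]
    have hPim : Pp a k m
        = ∏ j ∈ Finset.Icc 1 (m+1),
            F a k j ^ (if j = m+1 then 0 else (W k j (m-j)).toNat) := by
      rw [Finset.prod_Icc_succ_top (by omega : 1 ≤ m+1), if_pos rfl, pow_zero, mul_one, Pp]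
      refine Finset.prod_congr rfl fun j hj => ?_
      simp only [Finset.mem_Icc] at hj
      rw [if_neg (by omega)]
    rw [hPim, ← mul_assoc, ← Finset.prod_mul_distrib]
    have hPk : Pp a k (m+1) ^ k (m+1)
        = ∏ j ∈ Finset.Icc 1 (m+1), F a k j ^ ((W k j (m+1-j)).toNat * k (m+1)) := by
      rw [Pp, ← Finset.prod_pow]
      refine Finset.prod_congr rfl fun j _ => ?_
      rw [← pow_mul]
    rw [hPk]
    congr 1
    refine Finset.prod_congr rfl fun j hj => ?_
    simp only [Finset.mem_Icc] at hj
    rw [← pow_add]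
    congr 1
    by_cases hji : j = m+1
    · subst hji
      rw [if_pos rfl, show m+1+1-(m+1) = 1 by omega, show m+1-(m+1) = 0 by omega]
      simp [W]
    · rw [if_neg hji, show m+1+1-j = (m-j)+2 by omega, show m+1-j = (m-j)+1 by omega]
      have h0 := wnn r k hPSD (m-j) j hj.1 (by omega)
      have h1' := wnn r k hPSD ((m-j)+1) j hj.1 (by omega)
      have h2' := wnn r k hPSD ((m-j)+2) j hj.1 (by omega)
      have hrec0 : W k j ((m-j)+2) = (k (j+(m-j)+1) : ℤ) * W k j ((m-j)+1) - W k j (m-j) := rfl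
      rw [show j+(m-j)+1 = m+1 by omega] at hrec0
      have hz : ((W k j (m-j)).toNat : ℤ) + ((W k j ((m-j)+2)).toNat : ℤ)
          = ((W k j ((m-j)+1)).toNat : ℤ) * (k (m+1) : ℤ) := by
        rw [Int.toNat_of_nonneg h0, Int.toNat_of_nonneg h1', Int.toNat_of_nonneg h2', hrec0]
        ring
      exact_mod_cast hz
  · intro i _ hdvd
    obtain ⟨q, hq⟩ := hdvd
    have h1 := one_le_evp_Pp a k i
    rw [hq, map_mul] at h1
    have hX1 : evp (MvPolynomial.X 1) = 0 := by simp [evp]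
    rw [hX1, zero_mul] at h1
    exact absurd h1 (by norm_num)
end
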